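/- Let θ₀ > 0 and τ = 2π/θ₀. Define, for each positive integer n, φ_n² = (∫₀ⁿ x²·cos²(θ₀x)·e^{sin(θ₀x)} dx)⁻¹ and J_n = φ_n⁴ ∫₀ⁿ x⁴·sin²(θ₀x)·e^{sin(θ₀x)} dx − (φ_n³ ∫₀ⁿ x³·sin(θ₀x)·cos(θ₀x) dx)². Then lim_{n→∞} n·J_n = (9τ/5)·(∫₀^τ sin²(θ₀x)·e^{sin(θ₀x)} dx)/(∫₀^τ cos²(θ₀x)·e^{sin(θ₀x)} dx)². -/

import Mathlib

open MeasureTheory Set Filter intervalIntegral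

noncomputable section

lemma periodic_avg (f : ℝ → ℝ) (hf : Continuous f) (τ c : ℝ) (hτ : 0 < τ)
    (hper : Function.Periodic f τ) (hc : (∫ x in (0:ℝ)..τ, f x) = c * τ) (k : ℕ) :
    Tendsto (fun n : ℕ => (∫ x in (0:ℝ)..(n:ℝ), x ^ k * f x) / (n:ℝ) ^ (k+1)) atTop
      (nhds (c / ((k:ℝ)+1))) := by
  set g : ℝ → ℝ := fun x => f x - c with hgdef
  have hg : Continuous g := hf.sub continuous_const
  have hgint : ∀ a b : ℝ, IntervalIntegrable g volume a b := fun a b =>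
    hg.intervalIntegrable a b
  set G : ℝ → ℝ := fun x => ∫ t in (0:ℝ)..x, g t with hGdef
  have hGcont : Continuous G := intervalIntegral.continuous_primitive hgint 0
  have hgper : Function.Periodic g τ := fun x => by simp [hgdef, hper x]
  have hgzero : (∫ x in (0:ℝ)..τ, g x) = 0 := by
    have : (∫ x in (0:ℝ)..τ, g x) = (∫ x in (0:ℝ)..τ, f x) - ∫ x in (0:ℝ)..τ, (c:ℝ) :=
      intervalIntegral.integral_sub (hf.intervalIntegrable _ _)
        (intervalIntegrable_const)
    simp [this, hc, mul_comm]
  have hGper : Function.Periodic G τ := by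
    intro x
    have h1 : (∫ t in (0:ℝ)..(x+τ), g t)
        = (∫ t in (0:ℝ)..x, g t) + ∫ t in x..(x+τ), g t :=
      (intervalIntegral.integral_add_adjacent_intervals (hgint _ _) (hgint _ _)).symm
    have h2 : (∫ t in x..(x+τ), g t) = ∫ t in (0:ℝ)..(0+τ), g t :=
      hgper.intervalIntegral_add_eq x 0
    simp only [hGdef, h1, h2, zero_add, hgzero, add_zero]
  -- bound on G
  obtain ⟨M₀, hM₀⟩ := (isCompact_Icc (a := (0:ℝ)) (b := τ)).exists_bound_of_continuousOn
    hGcont.continuousOn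
  set M : ℝ := max M₀ 0 with hMdef
  have hM0 : 0 ≤ M := le_max_right _ _
  have hMbound : ∀ x : ℝ, |G x| ≤ M := by
    intro x
    obtain ⟨y, hy, hxy⟩ := hGper.exists_mem_Ico₀ hτ x
    rw [hxy]
    exact le_trans (hM₀ y ⟨hy.1, hy.2.le⟩) (le_max_left _ _)
  have hG' : ∀ x : ℝ, HasDerivAt G (g x) x := fun x =>
    intervalIntegral.integral_hasDerivAt_right (hgint 0 x)
      (hg.aestronglyMeasurable.stronglyMeasurableAtFilter) hg.continuousAt
  have hG0 : G 0 = 0 := intervalIntegral.integral_same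
  -- integration by parts
  have key : ∀ n : ℕ, (∫ x in (0:ℝ)..(n:ℝ), x ^ k * g x)
      = (n:ℝ) ^ k * G n - ∫ x in (0:ℝ)..(n:ℝ), ((k:ℝ) * x ^ (k-1)) * G x := by
    intro n
    have hparts := intervalIntegral.integral_mul_deriv_eq_deriv_mul
      (u := fun x : ℝ => x ^ k) (u' := fun x : ℝ => (k:ℝ) * x ^ (k-1))
      (v := G) (v' := g) (a := 0) (b := (n:ℝ))
      (fun x _ => hasDerivAt_pow k x) (fun x _ => hG' x)
      ((continuous_const.mul (continuous_pow _)).intervalIntegrable _ _)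
      (hgint _ _)
    rw [hparts, hG0]
    ring
  -- bound on the remainder
  have hbound : ∀ n : ℕ, 1 ≤ n →
      |∫ x in (0:ℝ)..(n:ℝ), x ^ k * g x| ≤ ((k:ℝ)+1) * M * (n:ℝ) ^ k := by
    intro n hn
    have hn0 : (0:ℝ) ≤ (n:ℝ) := Nat.cast_nonneg n
    have h1 : |(n:ℝ) ^ k * G n| ≤ M * (n:ℝ) ^ k := by
      rw [abs_mul]
      calc |(n:ℝ)^k| * |G (n:ℝ)| ≤ (n:ℝ)^k * M := by
            rw [abs_of_nonneg (by positivity)]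
            exact mul_le_mul_of_nonneg_left (hMbound _) (by positivity)
        _ = M * (n:ℝ)^k := mul_comm _ _
    have h2 : |∫ x in (0:ℝ)..(n:ℝ), ((k:ℝ) * x ^ (k-1)) * G x|
        ≤ ((k:ℝ) * (n:ℝ) ^ (k-1) * M) * |(n:ℝ) - 0| := by
      rw [← Real.norm_eq_abs]
      apply intervalIntegral.norm_integral_le_of_norm_le_const
      intro x hx
      rw [Set.uIoc_of_le hn0] at hx
      have hx0 : 0 < x := hx.1
      have hxn : x ≤ (n:ℝ) := hx.2
      have : |(k:ℝ) * x ^ (k-1) * G x| ≤ (k:ℝ) * x ^ (k-1) * M := by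
        rw [abs_mul]
        apply mul_le_mul (le_of_eq (abs_of_nonneg (by positivity))) (hMbound x)
          (abs_nonneg _) (by positivity)
      rw [Real.norm_eq_abs]
      refine this.trans ?_
      have hxle : x ^ (k-1) ≤ (n:ℝ) ^ (k-1) := pow_le_pow_left₀ hx0.le hxn _
      exact mul_le_mul_of_nonneg_right
        (mul_le_mul_of_nonneg_left hxle (Nat.cast_nonneg k)) hM0
    calc |∫ x in (0:ℝ)..(n:ℝ), x ^ k * g x|
        ≤ |(n:ℝ) ^ k * G n| + |∫ x in (0:ℝ)..(n:ℝ), ((k:ℝ) * x ^ (k-1)) * G x| := by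
          rw [key n]; exact abs_sub _ _
      _ ≤ M * (n:ℝ)^k + ((k:ℝ) * (n:ℝ) ^ (k-1) * M) * |(n:ℝ) - 0| := add_le_add h1 h2
      _ ≤ ((k:ℝ)+1) * M * (n:ℝ) ^ k := by
          rw [sub_zero, abs_of_nonneg hn0]
          rcases Nat.eq_zero_or_pos k with hk | hk
          · simp [hk]
          · have hkk : k - 1 + 1 = k := Nat.succ_pred_eq_of_pos hk
            have hpow : (n:ℝ)^(k-1) * (n:ℝ) = (n:ℝ)^k := by
              rw [← pow_succ, hkk]
            have h3 : (k:ℝ) * (n:ℝ)^(k-1) * M * (n:ℝ) = (k:ℝ) * M * (n:ℝ)^k := by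
              rw [← hpow]; ring
            rw [h3]
            nlinarith [pow_nonneg hn0 k]
  -- the remainder tends to 0
  set E : ℕ → ℝ := fun n => (∫ x in (0:ℝ)..(n:ℝ), x ^ k * g x) / (n:ℝ) ^ (k+1) with hEdef
  have hE0 : Tendsto E atTop (nhds 0) := by
    apply squeeze_zero_norm' (a := fun n : ℕ => (((k:ℝ)+1) * M) / (n:ℝ))
    · filter_upwards [eventually_ge_atTop 1] with n hn
      have hn0 : (0:ℝ) < (n:ℝ) := by exact_mod_cast Nat.lt_of_lt_of_le Nat.zero_lt_one hn
      have hEnorm : ‖E n‖ = |∫ x in (0:ℝ)..(n:ℝ), x ^ k * g x| / (n:ℝ)^(k+1) := by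
        rw [hEdef]
        rw [Real.norm_eq_abs, abs_div, abs_of_nonneg (by positivity : (0:ℝ) ≤ (n:ℝ)^(k+1))]
      rw [hEnorm]
      rw [div_le_div_iff₀ (by positivity) hn0]
      calc |∫ x in (0:ℝ)..(n:ℝ), x ^ k * g x| * (n:ℝ)
          ≤ (((k:ℝ)+1) * M * (n:ℝ)^k) * (n:ℝ) :=
            mul_le_mul_of_nonneg_right (hbound n hn) hn0.le
        _ = ((k:ℝ)+1) * M * (n:ℝ)^(k+1) := by rw [mul_assoc, ← pow_succ]
    · exact tendsto_const_div_atTop_nhds_zero_nat _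
  -- split the integral
  have hsplit : ∀ n : ℕ, (∫ x in (0:ℝ)..(n:ℝ), x ^ k * f x)
      = (∫ x in (0:ℝ)..(n:ℝ), x ^ k * g x) + c * (n:ℝ)^(k+1) / ((k:ℝ)+1) := by
    intro n
    have h1 : ∀ x : ℝ, x ^ k * f x = x ^ k * g x + x ^ k * c := by
      intro x; simp [hgdef]; ring
    rw [intervalIntegral.integral_congr (g := fun x => x ^ k * g x + x ^ k * c)
        (fun x _ => h1 x)]
    rw [intervalIntegral.integral_add (f := fun x => x ^ k * g x) (g := fun x => x ^ k * c)
        ((continuous_pow k |>.mul hg).intervalIntegrable _ _)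
        (((continuous_pow k).mul continuous_const).intervalIntegrable _ _)]
    congr 1
    rw [intervalIntegral.integral_mul_const, integral_pow]
    push_cast
    ring
  have hfinal := hE0.add (tendsto_const_nhds (x := c / ((k:ℝ)+1)))
  rw [zero_add] at hfinal
  apply hfinal.congr'
  filter_upwards [eventually_ge_atTop 1] with n hn
  have hn0 : (0:ℝ) < (n:ℝ) := by exact_mod_cast Nat.lt_of_lt_of_le Nat.zero_lt_one hn
  have hnk : ((n:ℝ))^(k+1) ≠ 0 := by positivity
  have hk1 : ((k:ℝ)+1) ≠ 0 := by positivity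
  rw [hEdef, hsplit n]
  field_simp

end

lemma aux_alg (I K C nn : ℝ) (hI : 0 ≤ I) (hnn : nn ≠ 0) :
    nn * ((Real.sqrt I)⁻¹ ^ 4 * K - ((Real.sqrt I)⁻¹ ^ 3 * C) ^ 2)
      = (nn ^ 3 / I) ^ 2 * (K / nn ^ 5) - (nn ^ 3 / I) ^ 3 * (C / nn ^ 4) ^ 2 := by
  rcases eq_or_lt_of_le hI with hI0 | hIpos
  · simp [← hI0]
  · have hs : Real.sqrt I ^ 2 = I := Real.sq_sqrt hI
    have h4 : (Real.sqrt I)⁻¹ ^ 4 = (I ^ 2)⁻¹ := by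
      rw [inv_pow, show (4:ℕ) = 2*2 from rfl, pow_mul, hs]
    have h6 : ((Real.sqrt I)⁻¹ ^ 3) ^ 2 = (I ^ 3)⁻¹ := by
      rw [← pow_mul, inv_pow]
      congr 1
      rw [show (3*2:ℕ) = 2*3 from rfl, pow_mul, hs]
    rw [mul_pow, h4, h6]
    field_simp

/-- Example 3, frequency parameter: for the intensity
`S(θ,x) = e^{sin(θx)}` on `[0,n]`, with `φ_n = (∫₀ⁿ x² cos²(θ₀x) e^{sin(θ₀x)})^{-1/2}` and
`J_n = φ_n⁴ ∫₀ⁿ x⁴ sin²(θ₀x) e^{sin(θ₀x)} − (φ_n³ ∫₀ⁿ x³ sin(θ₀x) cos(θ₀x))²`, one has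
`lim n·J_n = (9τ/5)·(∫₀^τ sin²(θ₀x) e^{sin(θ₀x)})/(∫₀^τ cos²(θ₀x) e^{sin(θ₀x)})²`
where `τ = 2π/θ₀`. -/
theorem statement_18 (θ₀ : ℝ) (hθ₀ : 0 < θ₀) :
    letI τ : ℝ := 2 * Real.pi / θ₀
    Tendsto (fun n : ℕ =>
      (n : ℝ) *
        ((Real.sqrt (∫ x in (0:ℝ)..(n:ℝ),
              x ^ 2 * Real.cos (θ₀ * x) ^ 2 * Real.exp (Real.sin (θ₀ * x))))⁻¹ ^ 4 *
            (∫ x in (0:ℝ)..(n:ℝ),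
              x ^ 4 * Real.sin (θ₀ * x) ^ 2 * Real.exp (Real.sin (θ₀ * x))) -
          ((Real.sqrt (∫ x in (0:ℝ)..(n:ℝ),
                x ^ 2 * Real.cos (θ₀ * x) ^ 2 * Real.exp (Real.sin (θ₀ * x))))⁻¹ ^ 3 *
              ∫ x in (0:ℝ)..(n:ℝ), x ^ 3 * Real.sin (θ₀ * x) * Real.cos (θ₀ * x)) ^ 2))
      atTop
      (nhds ((9 * τ / 5) *
        (∫ x in (0:ℝ)..τ, Real.sin (θ₀ * x) ^ 2 * Real.exp (Real.sin (θ₀ * x))) /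
          (∫ x in (0:ℝ)..τ, Real.cos (θ₀ * x) ^ 2 * Real.exp (Real.sin (θ₀ * x))) ^ 2)) := by
  set τ : ℝ := 2 * Real.pi / θ₀ with hτdef
  have hπ := Real.pi_pos
  have hτ : 0 < τ := by positivity
  have hθτ : θ₀ * τ = 2 * Real.pi := by
    rw [hτdef]
    field_simp
  -- the three periodic functions
  set f₁ : ℝ → ℝ := fun x => Real.cos (θ₀ * x) ^ 2 * Real.exp (Real.sin (θ₀ * x)) with hf₁def
  set f₂ : ℝ → ℝ := fun x => Real.sin (θ₀ * x) ^ 2 * Real.exp (Real.sin (θ₀ * x)) with hf₂def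
  set f₃ : ℝ → ℝ := fun x => Real.sin (θ₀ * x) * Real.cos (θ₀ * x) with hf₃def
  have hcont1 : Continuous f₁ := by fun_prop
  have hcont2 : Continuous f₂ := by fun_prop
  have hcont3 : Continuous f₃ := by fun_prop
  have hadd : ∀ x : ℝ, θ₀ * (x + τ) = θ₀ * x + 2 * Real.pi := by
    intro x; rw [mul_add, hθτ]
  have hp1 : Function.Periodic f₁ τ := fun x => by
    simp [hf₁def, hadd x, Real.cos_add_two_pi, Real.sin_add_two_pi]
  have hp2 : Function.Periodic f₂ τ := fun x => by
    simp [hf₂def, hadd x, Real.cos_add_two_pi, Real.sin_add_two_pi]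
  have hp3 : Function.Periodic f₃ τ := fun x => by
    simp [hf₃def, hadd x, Real.cos_add_two_pi, Real.sin_add_two_pi]
  set A : ℝ := ∫ x in (0:ℝ)..τ, f₁ x with hAdef
  set B : ℝ := ∫ x in (0:ℝ)..τ, f₂ x with hBdef
  -- positivity of A
  have hApos : 0 < A := by
    have hs8 : (0:ℝ) < τ/8 := by positivity
    have hsplit : A = (∫ x in (0:ℝ)..(τ/8), f₁ x) + ∫ x in (τ/8)..τ, f₁ x :=
      (intervalIntegral.integral_add_adjacent_intervals
        (hcont1.intervalIntegrable _ _) (hcont1.intervalIntegrable _ _)).symm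
    have h1 : 0 < ∫ x in (0:ℝ)..(τ/8), f₁ x := by
      apply intervalIntegral.intervalIntegral_pos_of_pos_on
        (hcont1.intervalIntegrable _ _) _ hs8
      intro x hx
      have hx1 : 0 < θ₀ * x := by
        have := hx.1; positivity
      have hx2 : θ₀ * x < Real.pi / 2 := by
        have h := mul_lt_mul_of_pos_left hx.2 hθ₀
        rw [show θ₀ * (τ/8) = (2*Real.pi)/8 by rw [← hθτ]; ring] at h
        nlinarith
      have hcos : 0 < Real.cos (θ₀ * x) :=
        Real.cos_pos_of_mem_Ioo ⟨by linarith, hx2⟩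
      simp only [hf₁def]
      positivity
    have h2 : 0 ≤ ∫ x in (τ/8)..τ, f₁ x := by
      apply intervalIntegral.integral_nonneg (by linarith)
      intro x _
      simp only [hf₁def]; positivity
    linarith [hsplit ▸ add_pos_of_pos_of_nonneg h1 h2]
  have hAne : A ≠ 0 := ne_of_gt hApos
  -- mean-value hypotheses
  have hc1 : (∫ x in (0:ℝ)..τ, f₁ x) = (A/τ) * τ := by
    rw [div_mul_cancel₀ _ (ne_of_gt hτ)]
  have hc2 : (∫ x in (0:ℝ)..τ, f₂ x) = (B/τ) * τ := by
    rw [div_mul_cancel₀ _ (ne_of_gt hτ)]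
  have hc3 : (∫ x in (0:ℝ)..τ, f₃ x) = 0 * τ := by
    rw [zero_mul]
    have hF : ∀ x ∈ Set.uIcc (0:ℝ) τ,
        HasDerivAt (fun y => Real.sin (θ₀ * y) ^ 2 / (2 * θ₀)) (f₃ x) x := by
      intro x _
      have h1 : HasDerivAt (fun y : ℝ => θ₀ * y) (θ₀ * 1) x :=
        (hasDerivAt_id x).const_mul θ₀
      have h2 : HasDerivAt (fun y : ℝ => Real.sin (θ₀ * y)) (Real.cos (θ₀ * x) * (θ₀ * 1)) x :=
        (Real.hasDerivAt_sin (θ₀ * x)).comp x h1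
      have h3 := (h2.pow 2).div_const (2 * θ₀)
      convert h3 using 1
      show Real.sin (θ₀ * x) * Real.cos (θ₀ * x) = _
      field_simp
      ring
      all_goals rfl
    rw [intervalIntegral.integral_eq_sub_of_hasDerivAt hF (hcont3.intervalIntegrable _ _)]
    rw [hθτ]
    simp [Real.sin_two_pi]
  -- the three limits
  have hI := periodic_avg f₁ hcont1 τ (A/τ) hτ hp1 hc1 2
  have hK := periodic_avg f₂ hcont2 τ (B/τ) hτ hp2 hc2 4
  have hC := periodic_avg f₃ hcont3 τ 0 hτ hp3 hc3 3
  have hLne : (A/τ) / (((2:ℕ):ℝ)+1) ≠ 0 := by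
    have : (0:ℝ) < (A/τ) / (((2:ℕ):ℝ)+1) := by positivity
    exact ne_of_gt this
  have hI' := hI.inv₀ hLne
  simp only [inv_div] at hI'
  -- assemble
  have hmain := ((hI'.pow 2).mul hK).sub ((hI'.pow 3).mul (hC.pow 2))
  have hval : ((((2:ℕ):ℝ)+1) / (A/τ)) ^ 2 * ((B/τ) / (((4:ℕ):ℝ)+1))
      - ((((2:ℕ):ℝ)+1) / (A/τ)) ^ 3 * (0 / (((3:ℕ):ℝ)+1)) ^ 2
      = (9 * τ / 5) * B / A ^ 2 := by
    push_cast
    rw [zero_div]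
    field_simp
    ring
  rw [hval] at hmain
  apply hmain.congr'
  filter_upwards [eventually_ge_atTop 1] with n hn
  have hn0 : (0:ℝ) < (n:ℝ) := by exact_mod_cast Nat.lt_of_lt_of_le Nat.zero_lt_one hn
  have e1 : (∫ x in (0:ℝ)..(n:ℝ), x ^ 2 * Real.cos (θ₀*x) ^ 2 * Real.exp (Real.sin (θ₀*x)))
      = ∫ x in (0:ℝ)..(n:ℝ), x ^ 2 * f₁ x :=
    intervalIntegral.integral_congr fun x _ => mul_assoc _ _ _
  have e2 : (∫ x in (0:ℝ)..(n:ℝ), x ^ 4 * Real.sin (θ₀*x) ^ 2 * Real.exp (Real.sin (θ₀*x)))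
      = ∫ x in (0:ℝ)..(n:ℝ), x ^ 4 * f₂ x :=
    intervalIntegral.integral_congr fun x _ => mul_assoc _ _ _
  have e3 : (∫ x in (0:ℝ)..(n:ℝ), x ^ 3 * Real.sin (θ₀*x) * Real.cos (θ₀*x))
      = ∫ x in (0:ℝ)..(n:ℝ), x ^ 3 * f₃ x :=
    intervalIntegral.integral_congr fun x _ => mul_assoc _ _ _
  have hInonneg : 0 ≤ ∫ x in (0:ℝ)..(n:ℝ), x ^ 2 * f₁ x := by
    apply intervalIntegral.integral_nonneg hn0.le
    intro x hx
    simp only [hf₁def]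
    positivity
  show (((n:ℝ)^(2+1)) / (∫ x in (0:ℝ)..(n:ℝ), x ^ 2 * f₁ x)) ^ 2
        * ((∫ x in (0:ℝ)..(n:ℝ), x ^ 4 * f₂ x) / (n:ℝ)^(4+1))
      - (((n:ℝ)^(2+1)) / (∫ x in (0:ℝ)..(n:ℝ), x ^ 2 * f₁ x)) ^ 3
        * ((∫ x in (0:ℝ)..(n:ℝ), x ^ 3 * f₃ x) / (n:ℝ)^(3+1)) ^ 2
      = _
  rw [e1, e2, e3]
  exact (aux_alg _ _ _ _ hInonneg (ne_of_gt hn0)).symm
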